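/- arXiv:math/0108127 — 2 statements merged into one kernel-verified Lean document; each statement's English description precedes it below -/
import Mathlib

section
/- Only finitely many numbers can be proven incompressible in a sound recursively axiomatized theory (Chaitin's incompleteness, abstract form): suppose P : ℕ → ℕ → Prop is a computably enumerable relation ('P n m means there is a proof that C(m) ≥ n') that is sound (P n m → C(m) ≥ n, for the complexity C of a universal machine satisfying the invariance property). Then there is a constant L such that for all n > L, P n m holds for no m; i.e., the theory proves 'C(m) ≥ n' for at most finitely many thresholds n. -/
open Nat.Partrec (Code)
open Nat.Partrec.Code

/-- Chaitin's incompleteness, abstract form: if `P n m` is a computably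
enumerable relation ("there is a proof that `C m ≥ n`") that is sound for a
complexity `C` satisfying the invariance property, then only finitely many
thresholds `n` admit any provably `n`-incompressible number. -/
theorem chaitin_incompleteness (C : ℕ → ℕ)
    (hinv : ∀ f : ℕ → ℕ, Computable f →
      ∃ c : ℕ, ∀ k : ℕ, C (f k) ≤ 2 * Nat.log 2 (k + 2) + c)
    (P : ℕ → ℕ → Prop)
    (hce : ∃ W : ℕ →. ℕ, Partrec W ∧ ∀ n m : ℕ, (P n m ↔ (W (Nat.pair n m)).Dom))
    (hsound : ∀ n m : ℕ, P n m → n ≤ C m) :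
    ∃ L : ℕ, ∀ n : ℕ, L < n → ∀ m : ℕ, ¬ P n m := by
  by_contra hL
  push_neg at hL
  obtain ⟨W, hW, hWP⟩ := hce
  obtain ⟨cd, hcd⟩ := exists_code.1 (Partrec.nat_iff.1 hW)
  -- search predicate: t encodes ((j, m), s); test whether `W (pair (k+j) m)`
  -- halts in `s` steps
  set pr : ℕ → ℕ → Bool := fun k t =>
    (evaln t.unpair.2 cd
      (Nat.pair (k + t.unpair.1.unpair.1) t.unpair.1.unpair.2)).isSome with hpr
  have hprc : Computable₂ pr := by
    have h1 : Primrec (fun p : ℕ × ℕ =>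
        evaln p.2.unpair.2 cd
          (Nat.pair (p.1 + p.2.unpair.1.unpair.1) p.2.unpair.1.unpair.2)) := by
      exact primrec_evaln.comp (Primrec.pair
        (Primrec.pair
          (Primrec.snd.comp (Primrec.unpair.comp Primrec.snd))
          (Primrec.const cd))
        (Primrec₂.natPair.comp
          (Primrec.nat_add.comp Primrec.fst
            (Primrec.fst.comp (Primrec.unpair.comp
              (Primrec.fst.comp (Primrec.unpair.comp Primrec.snd)))))
          (Primrec.snd.comp (Primrec.unpair.comp
            (Primrec.fst.comp (Primrec.unpair.comp Primrec.snd))))))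
    exact ((Primrec.option_isSome.comp h1).to₂.to_comp : _)
  -- the partial search function
  set F : ℕ →. ℕ := fun k =>
    (Nat.rfind fun t => Part.some (pr k t)).map fun t => t.unpair.1.unpair.2
    with hF
  have hFp : Partrec F := by
    exact (Partrec.rfind (hprc.partrec₂)).map
      ((Primrec.snd.comp (Primrec.unpair.comp
        (Primrec.fst.comp (Primrec.unpair.comp Primrec.snd)))).to_comp.to₂)
  -- totality of the search
  have htot : ∀ k, (F k).Dom := by
    intro k
    obtain ⟨n, hkn, m, hPnm⟩ := hL k
    have hdom : (W (Nat.pair n m)).Dom := (hWP n m).1 hPnm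
    have : (eval cd (Nat.pair n m)).Dom := by rw [hcd]; exact hdom
    obtain ⟨v, hv⟩ := Part.dom_iff_mem.1 this
    obtain ⟨s, hs⟩ := evaln_complete.1 hv
    have hj : k + (n - k) = n := by omega
    have hpt : pr k (Nat.pair (Nat.pair (n - k) m) s) = true := by
      simp only [hpr, Nat.unpair_pair, hj]
      rw [Option.isSome_iff_exists]
      exact ⟨v, hs⟩
    have : (Nat.rfind fun t => Part.some (pr k t)).Dom :=
      Nat.rfind_dom.2 ⟨_, by simpa using hpt, fun _ => trivial⟩
    simpa [hF] using this
  classical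
  set f : ℕ → ℕ := fun k => (F k).get (htot k) with hf
  have hfc : Computable f := hFp.of_eq_tot fun k => Part.get_mem (htot k)
  -- soundness: C (f k) ≥ k
  have hlow : ∀ k, k ≤ C (f k) := by
    intro k
    have hmem : f k ∈ F k := Part.get_mem (htot k)
    rw [hF] at hmem
    obtain ⟨t, ht0, hteq⟩ := (Part.mem_map_iff _).1 hmem
    obtain ⟨ht, -⟩ := Nat.mem_rfind.1 ht0
    simp only [Part.mem_some_iff] at ht
    have ht' : (evaln t.unpair.2 cd
        (Nat.pair (k + t.unpair.1.unpair.1) t.unpair.1.unpair.2)).isSome :=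
      ht.symm
    obtain ⟨v, hv⟩ := Option.isSome_iff_exists.1 ht'
    have hev : v ∈ eval cd
        (Nat.pair (k + t.unpair.1.unpair.1) t.unpair.1.unpair.2) :=
      evaln_sound hv
    have hdom : (W (Nat.pair (k + t.unpair.1.unpair.1)
        t.unpair.1.unpair.2)).Dom := by
      rw [← hcd]; exact Part.dom_iff_mem.2 ⟨v, hev⟩
    have hP := (hWP _ _).2 hdom
    have := hsound _ _ hP
    calc k ≤ k + t.unpair.1.unpair.1 := Nat.le_add_right _ _
      _ ≤ C t.unpair.1.unpair.2 := this
      _ = C (f k) := by rw [hteq]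
  obtain ⟨c0, hc0⟩ := hinv f hfc
  -- contradiction at k = 2 ^ (c0 + 4)
  have h1 : 2 ^ (c0 + 4) ≤ 2 * Nat.log 2 (2 ^ (c0 + 4) + 2) + c0 :=
    le_trans (hlow _) (hc0 _)
  have h2 : Nat.log 2 (2 ^ (c0 + 4) + 2) < c0 + 5 := by
    have h5 : (2:ℕ) ^ 4 ≤ 2 ^ (c0 + 4) := Nat.pow_le_pow_right (by norm_num) (by omega)
    norm_num at h5
    have h6 : 2 ^ (c0 + 5) = 2 * 2 ^ (c0 + 4) := by ring
    exact Nat.log_lt_of_lt_pow (by omega) (by omega)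
  have h3 : c0 < 2 ^ c0 := Nat.lt_two_pow_self
  have h4 : 2 ^ (c0 + 4) = 16 * 2 ^ c0 := by ring
  omega
end

section
/- The limiting frequency claim for a 'random' binary sequence is consistent with measure theory: for almost every x in [0,1] (with respect to Lebesgue measure), the binary digits of x have limiting frequency 1/2, i.e., (1/N) · #{n < N : digit n of x = 1} → 1/2 as N → ∞ (Borel's normal number theorem for base 2). -/
open MeasureTheory Filter Set ProbabilityTheory
open scoped ENNReal

/-- The set where the `n`-th binary digit is `1`. -/
def digitOneSet (n : ℕ) : Set ℝ :=
  {x | ⌊(2 : ℝ) ^ (n + 1) * x⌋ - 2 * ⌊(2 : ℝ) ^ n * x⌋ = 1}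

lemma measurable_digit (n : ℕ) :
    Measurable fun x : ℝ => ⌊(2 : ℝ) ^ (n + 1) * x⌋ - 2 * ⌊(2 : ℝ) ^ n * x⌋ := by
  exact (Int.measurable_floor.comp (measurable_const_mul _)).sub
    ((Int.measurable_floor.comp (measurable_const_mul _)).const_mul 2)

lemma measurableSet_digitOneSet (n : ℕ) : MeasurableSet (digitOneSet n) :=
  measurable_digit n (measurableSet_singleton 1)

/-- Within a level-`n` dyadic interval, the digit-`n`-is-one set is exactly the right half. -/
lemma digitOneSet_inter_Ico (n : ℕ) (j : ℤ) :
    digitOneSet n ∩ Ico ((j : ℝ) / 2 ^ n) ((j + 1 : ℤ) / 2 ^ n)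
      = Ico (((2 * j + 1 : ℤ) : ℝ) / 2 ^ (n + 1)) (((2 * j + 2 : ℤ) : ℝ) / 2 ^ (n + 1)) := by
  have h2 : (0:ℝ) < 2 ^ n := by positivity
  have h2' : (0:ℝ) < 2 ^ (n+1) := by positivity
  ext x
  simp only [digitOneSet, mem_inter_iff, mem_setOf_eq, mem_Ico, div_le_iff₀ h2,
    lt_div_iff₀ h2, div_le_iff₀ h2', lt_div_iff₀ h2']
  have key : x * 2 ^ (n+1) = (x * 2 ^ n) * 2 := by ring
  constructor
  · rintro ⟨hd, ha, hb⟩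
    push_cast at ha hb
    have hfl : ⌊(2:ℝ) ^ n * x⌋ = j := by
      rw [Int.floor_eq_iff, mul_comm]
      push_cast
      exact ⟨ha, hb⟩
    rw [hfl] at hd
    have hfl2 : ⌊(2:ℝ) ^ (n+1) * x⌋ = 2 * j + 1 := by omega
    have hle := Int.floor_le ((2:ℝ) ^ (n+1) * x)
    have hlt := Int.lt_floor_add_one ((2:ℝ) ^ (n+1) * x)
    rw [hfl2, mul_comm ((2:ℝ) ^ (n+1)) x] at hle hlt
    push_cast at hle hlt ⊢
    constructor <;> linarith
  · rintro ⟨ha, hb⟩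
    push_cast at ha hb
    have hfl2 : ⌊(2:ℝ) ^ (n+1) * x⌋ = 2 * j + 1 := by
      rw [Int.floor_eq_iff, mul_comm]
      push_cast
      constructor <;> linarith
    have hfl : ⌊(2:ℝ) ^ n * x⌋ = j := by
      rw [Int.floor_eq_iff, mul_comm]
      push_cast
      constructor <;> linarith
    refine ⟨by rw [hfl2, hfl]; ring, ?_, ?_⟩ <;> push_cast <;> linarith

lemma volume_digitOneSet_inter (n : ℕ) (p : ℤ) (k : ℕ) :
    volume (digitOneSet n ∩ Ico ((p : ℝ) / 2 ^ n) (((p : ℝ) + k) / 2 ^ n))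
      = ENNReal.ofReal (k / 2 ^ (n + 1)) := by
  induction k with
  | zero => simp
  | succ k ih =>
    have h2 : (0:ℝ) < 2 ^ n := by positivity
    have hsplit : Ico ((p : ℝ) / 2 ^ n) (((p : ℝ) + (k + 1)) / 2 ^ n)
        = Ico ((p : ℝ) / 2 ^ n) (((p : ℝ) + k) / 2 ^ n)
          ∪ Ico (((p : ℝ) + k) / 2 ^ n) (((p : ℝ) + (k + 1)) / 2 ^ n) := by
      rw [Set.Ico_union_Ico_eq_Ico]
      · exact (div_le_div_iff_of_pos_right h2).mpr (by linarith)
      · exact (div_le_div_iff_of_pos_right h2).mpr (by linarith)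
    have hpiece : digitOneSet n ∩ Ico (((p : ℝ) + k) / 2 ^ n) (((p : ℝ) + (k + 1)) / 2 ^ n)
        = Ico (((2 * (p + k) + 1 : ℤ) : ℝ) / 2 ^ (n + 1)) (((2 * (p + k) + 2 : ℤ) : ℝ) / 2 ^ (n + 1)) := by
      have := digitOneSet_inter_Ico n (p + k)
      convert this using 4 <;> push_cast <;> ring
    have hm : volume (Ico (((2 * (p + k) + 1 : ℤ) : ℝ) / 2 ^ (n + 1))
        (((2 * (p + k) + 2 : ℤ) : ℝ) / 2 ^ (n + 1))) = ENNReal.ofReal (1 / 2 ^ (n + 1)) := by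
      rw [Real.volume_Ico]
      congr 1
      push_cast
      field_simp
      ring
    push_cast
    rw [hsplit, Set.inter_union_distrib_left, measure_union, ih, hpiece, hm,
      ← ENNReal.ofReal_add (by positivity) (by positivity)]
    · congr 1
      field_simp
    · exact Set.Ico_disjoint_Ico_same.mono inf_le_right inf_le_right
    · exact (measurableSet_digitOneSet n).inter measurableSet_Ico

lemma digitOneSet_inter_Ico01 (m : ℕ) :
    digitOneSet m ∩ Ico (0:ℝ) 1
      = ⋃ j ∈ Finset.range (2 ^ m), Ico ((2*(j:ℝ)+1) / 2 ^ (m+1)) ((2*(j:ℝ)+2) / 2 ^ (m+1)) := by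
  have h2 : (0:ℝ) < 2 ^ m := by positivity
  have h2' : (0:ℝ) < 2 ^ (m+1) := by positivity
  ext x
  simp only [mem_inter_iff, mem_Ico, Set.mem_iUnion, Finset.mem_range, exists_prop]
  constructor
  · rintro ⟨hx, h0, h1⟩
    set j : ℤ := ⌊(2:ℝ) ^ m * x⌋ with hj
    have hj0 : 0 ≤ j := Int.floor_nonneg.mpr (by positivity)
    have hjlt : j < 2 ^ m := by
      have : (2:ℝ) ^ m * x < 2 ^ m := by nlinarith
      have := Int.floor_le_floor (R := ℝ) this.le
      have hfl : ⌊(2:ℝ)^m⌋ = (2^m : ℤ) := by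
        rw [show ((2:ℝ)^m) = ((2^m : ℤ) : ℝ) by push_cast; ring]
        exact Int.floor_intCast _
      rcases eq_or_lt_of_le (Int.floor_le_floor (R := ℝ) (le_refl ((2:ℝ)^m * x))) with h | h
      · -- j < 2^m since 2^m x < 2^m and floor ≤
        by_contra hc
        push_neg at hc
        have : ((2:ℝ)^m : ℝ) ≤ 2 ^ m * x := by
          calc ((2:ℝ)^m) = ((2^m : ℤ) : ℝ) := by push_cast; ring
          _ ≤ (j : ℝ) := by exact_mod_cast hc
          _ ≤ 2 ^ m * x := Int.floor_le _
        nlinarith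
      · omega
    have hmem : x ∈ digitOneSet m ∩ Ico ((j : ℝ) / 2 ^ m) ((j + 1 : ℤ) / 2 ^ m) := by
      refine ⟨hx, ?_, ?_⟩
      · rw [div_le_iff₀ h2, mul_comm]
        exact Int.floor_le _
      · rw [lt_div_iff₀ h2, mul_comm]
        push_cast
        exact Int.lt_floor_add_one _
    rw [digitOneSet_inter_Ico] at hmem
    have h2m : ((2:ℤ))^m = ((2^m : ℕ) : ℤ) := by push_cast; ring
    have hjr : ((j.toNat : ℕ) : ℝ) = (j : ℝ) := by exact_mod_cast Int.toNat_of_nonneg hj0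
    refine ⟨j.toNat, by omega, ?_, ?_⟩
    · have := hmem.1
      rw [div_le_iff₀ h2'] at this ⊢
      push_cast at this ⊢
      rw [hjr]
      linarith
    · have := hmem.2
      rw [lt_div_iff₀ h2'] at this ⊢
      push_cast at this ⊢
      rw [hjr]
      linarith
  · rintro ⟨j, hjlt, ha, hb⟩
    have hmem : x ∈ digitOneSet m ∩ Ico (((j:ℤ) : ℝ) / 2 ^ m) (((j:ℤ) + 1 : ℤ) / 2 ^ m) := by
      rw [digitOneSet_inter_Ico]
      constructor
      · rw [div_le_iff₀ h2'] at ha ⊢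
        push_cast
        linarith
      · rw [lt_div_iff₀ h2'] at hb ⊢
        push_cast
        linarith
    refine ⟨hmem.1, ?_, ?_⟩
    · have hnn : (0:ℝ) ≤ (2*(j:ℝ)+1) / 2 ^ (m+1) := by positivity
      linarith [div_le_iff₀ h2' |>.mp ha, hnn, ha]
    · have hlt := hmem.2.2
      have hj1 : ((j:ℤ) + 1 : ℤ) ≤ (2:ℤ)^m := by exact_mod_cast hjlt
      have : (((j:ℤ) + 1 : ℤ) : ℝ) / 2 ^ m ≤ 1 := by
        rw [div_le_one h2]
        calc (((j:ℤ) + 1 : ℤ) : ℝ) ≤ ((2:ℤ)^m : ℝ) := by exact_mod_cast hj1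
        _ = 2 ^ m := by push_cast; ring
      linarith

lemma volume_digitOneSet (n : ℕ) :
    volume (digitOneSet n ∩ Ico (0:ℝ) 1) = ENNReal.ofReal (1/2) := by
  have h := volume_digitOneSet_inter n 0 (2 ^ n)
  have h2 : (0:ℝ) < 2 ^ n := by positivity
  have e0 : ((0:ℤ) : ℝ) / 2 ^ n = 0 := by simp
  have e1 : (((0:ℤ) : ℝ) + ((2:ℕ) ^ n : ℕ)) / 2 ^ n = 1 := by
    push_cast
    field_simp
    ring
  rw [e0, e1] at h
  rw [h]
  congr 1
  push_cast
  rw [pow_succ]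
  have : (0:ℝ) < 2 ^ n := by positivity
  field_simp

lemma volume_digitOneSet_pair (m t : ℕ) :
    volume (digitOneSet m ∩ digitOneSet (m + 1 + t) ∩ Ico (0:ℝ) 1)
      = ENNReal.ofReal (1/4) := by
  set n := m + 1 + t with hn
  have h2 : (0:ℝ) < 2 ^ (m+1) := by positivity
  have hre : digitOneSet m ∩ digitOneSet n ∩ Ico (0:ℝ) 1
      = ⋃ j ∈ Finset.range (2 ^ m),
          digitOneSet n ∩ Ico ((2*(j:ℝ)+1) / 2 ^ (m+1)) ((2*(j:ℝ)+2) / 2 ^ (m+1)) := by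
    rw [show digitOneSet m ∩ digitOneSet n ∩ Ico (0:ℝ) 1
        = digitOneSet n ∩ (digitOneSet m ∩ Ico (0:ℝ) 1) by
      ext x; simp only [mem_inter_iff]; tauto]
    rw [digitOneSet_inter_Ico01, Set.inter_iUnion₂]
  rw [hre, measure_biUnion_finset]
  · have hterm : ∀ j ∈ Finset.range (2 ^ m),
        volume (digitOneSet n ∩ Ico ((2*(j:ℝ)+1) / 2 ^ (m+1)) ((2*(j:ℝ)+2) / 2 ^ (m+1)))
          = ENNReal.ofReal ((2 ^ t : ℕ) / 2 ^ (n + 1)) := by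
      intro j _
      have hp := volume_digitOneSet_inter n ((2 * j + 1) * 2 ^ t) (2 ^ t)
      have epow : (2:ℝ) ^ n = 2 ^ (m+1) * 2 ^ t := by rw [hn, pow_add]
      have e1 : (((2 * (j:ℤ) + 1) * 2 ^ t : ℤ) : ℝ) / 2 ^ n = (2*(j:ℝ)+1) / 2 ^ (m+1) := by
        push_cast
        rw [epow]
        have ht : (0:ℝ) < 2 ^ t := by positivity
        field_simp
      have e2 : ((((2 * (j:ℤ) + 1) * 2 ^ t : ℤ) : ℝ) + ((2:ℕ) ^ t : ℕ)) / 2 ^ n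
          = (2*(j:ℝ)+2) / 2 ^ (m+1) := by
        push_cast
        rw [epow]
        have ht : (0:ℝ) < 2 ^ t := by positivity
        field_simp
        ring
      rw [e1, e2] at hp
      exact hp
    rw [Finset.sum_congr rfl hterm, Finset.sum_const, Finset.card_range, nsmul_eq_mul]
    rw [show ((2^m : ℕ) : ℝ≥0∞) = ENNReal.ofReal ((2^m : ℕ) : ℝ) by
      rw [ENNReal.ofReal_natCast]]
    rw [← ENNReal.ofReal_mul (by positivity)]
    congr 1
    push_cast
    rw [hn]
    rw [show (2:ℝ) ^ (m + 1 + t + 1) = 2 ^ m * 2 ^ t * 4 by rw [pow_add, pow_add, pow_add]; ring]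
    have hm : (0:ℝ) < 2 ^ m := by positivity
    have ht : (0:ℝ) < 2 ^ t := by positivity
    field_simp
  · intro i hi j hj hij
    have hd : Disjoint (Ico ((2*(i:ℝ)+1) / 2 ^ (m+1)) ((2*(i:ℝ)+2) / 2 ^ (m+1)))
        (Ico ((2*(j:ℝ)+1) / 2 ^ (m+1)) ((2*(j:ℝ)+2) / 2 ^ (m+1))) := by
      rw [Set.Ico_disjoint_Ico]
      rcases Ne.lt_or_gt hij with h | h
      · calc min ((2*(i:ℝ)+2) / 2 ^ (m+1)) ((2*(j:ℝ)+2) / 2 ^ (m+1))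
            ≤ (2*(i:ℝ)+2) / 2 ^ (m+1) := min_le_left _ _
          _ ≤ (2*(j:ℝ)+1) / 2 ^ (m+1) := by
              have hle : (2*(i:ℝ)+2) ≤ 2*(j:ℝ)+1 := by
                have : (2*i+2:ℕ) ≤ 2*j+1 := by omega
                exact_mod_cast this
              exact (div_le_div_iff_of_pos_right h2).mpr hle
          _ ≤ _ := le_max_right _ _
      · calc min ((2*(i:ℝ)+2) / 2 ^ (m+1)) ((2*(j:ℝ)+2) / 2 ^ (m+1))
            ≤ (2*(j:ℝ)+2) / 2 ^ (m+1) := min_le_right _ _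
          _ ≤ (2*(i:ℝ)+1) / 2 ^ (m+1) := by
              have hle : (2*(j:ℝ)+2) ≤ 2*(i:ℝ)+1 := by
                have : (2*j+2:ℕ) ≤ 2*i+1 := by omega
                exact_mod_cast this
              exact (div_le_div_iff_of_pos_right h2).mpr hle
          _ ≤ _ := le_max_left _ _
    exact hd.mono inf_le_right inf_le_right
  · intro j _
    exact (measurableSet_digitOneSet n).inter measurableSet_Ico

noncomputable def mu : Measure ℝ := volume.restrict (Set.Icc (0:ℝ) 1)

instance : IsProbabilityMeasure mu :=
  ⟨by rw [mu, Measure.restrict_apply_univ, Real.volume_Icc]; norm_num⟩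

lemma restrict_eq_Ico (S : Set ℝ) (hS : MeasurableSet S) :
    mu S = volume (S ∩ Ico (0:ℝ) 1) := by
  rw [mu, Measure.restrict_apply hS]
  exact measure_congr ((Filter.EventuallyEq.refl _ _).inter Ico_ae_eq_Icc.symm)

lemma mu_A (n : ℕ) : mu (digitOneSet n) = ENNReal.ofReal (1/2) := by
  rw [restrict_eq_Ico _ (measurableSet_digitOneSet n), volume_digitOneSet]

lemma mu_A_compl (n : ℕ) : mu (digitOneSet n)ᶜ = ENNReal.ofReal (1/2) := by
  rw [prob_compl_eq_one_sub (measurableSet_digitOneSet n), mu_A,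
    ← ENNReal.ofReal_one, ← ENNReal.ofReal_sub _ (by norm_num)]
  norm_num

lemma mu_AA {m n : ℕ} (h : m < n) : mu (digitOneSet m ∩ digitOneSet n) = ENNReal.ofReal (1/4) := by
  obtain ⟨t, rfl⟩ : ∃ t, n = m + 1 + t := ⟨n - m - 1, by omega⟩
  rw [restrict_eq_Ico _ ((measurableSet_digitOneSet m).inter (measurableSet_digitOneSet _)), volume_digitOneSet_pair]

lemma ofReal_quarter_add : ENNReal.ofReal (1/4) + ENNReal.ofReal (1/4) = ENNReal.ofReal (1/2) := by
  rw [← ENNReal.ofReal_add (by norm_num) (by norm_num)]; norm_num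

lemma mu_A_compl_inter {m n : ℕ} (h : m < n) :
    mu (digitOneSet m ∩ (digitOneSet n)ᶜ) = ENNReal.ofReal (1/4) ∧
    mu ((digitOneSet m)ᶜ ∩ digitOneSet n) = ENNReal.ofReal (1/4) ∧
    mu ((digitOneSet m)ᶜ ∩ (digitOneSet n)ᶜ) = ENNReal.ofReal (1/4) := by
  have key : ∀ S T : Set ℝ, MeasurableSet T → mu (S ∩ T) = ENNReal.ofReal (1/4) →
      mu S = ENNReal.ofReal (1/2) → mu (S ∩ Tᶜ) = ENNReal.ofReal (1/4) := by
    intro S T hT hST hS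
    have hdiff := measure_inter_add_diff (μ := mu) S hT
    rw [hST, hS, Set.diff_eq] at hdiff
    rw [← ENNReal.add_right_inj (a := ENNReal.ofReal (1/4)) ENNReal.ofReal_ne_top,
      hdiff, ofReal_quarter_add]
  have h1 : mu (digitOneSet m ∩ (digitOneSet n)ᶜ) = ENNReal.ofReal (1/4) :=
    key _ _ (measurableSet_digitOneSet n) (mu_AA h) (mu_A m)
  have h2 : mu ((digitOneSet n) ∩ (digitOneSet m)ᶜ) = ENNReal.ofReal (1/4) :=
    key _ _ (measurableSet_digitOneSet m) (by rw [Set.inter_comm]; exact mu_AA h) (mu_A n)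
  have h3 : mu ((digitOneSet m)ᶜ ∩ (digitOneSet n)ᶜ) = ENNReal.ofReal (1/4) :=
    key _ _ (measurableSet_digitOneSet n) (by rw [Set.inter_comm]; exact h2) (mu_A_compl m)
  exact ⟨h1, by rw [Set.inter_comm]; exact h2, h3⟩

noncomputable def XX (n : ℕ) : ℝ → ℝ := (digitOneSet n).indicator fun _ => (1:ℝ)

lemma measurable_XX (n : ℕ) : Measurable (XX n) :=
  measurable_const.indicator (measurableSet_digitOneSet n)

lemma indep_XX {m n : ℕ} (h : m < n) : IndepFun (XX m) (XX n) mu := by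
  obtain ⟨h1, h2, h3⟩ := mu_A_compl_inter h
  have hq : ENNReal.ofReal (1/4) = ENNReal.ofReal (1/2) * ENNReal.ofReal (1/2) := by
    rw [← ENNReal.ofReal_mul (by norm_num)]; norm_num
  classical
  rw [indepFun_iff_measure_inter_preimage_eq_mul]
  intro s t _ _
  rw [XX, XX, Set.indicator_const_preimage_eq_union, Set.indicator_const_preimage_eq_union]
  split_ifs <;>
    simp only [Set.union_empty, Set.empty_union, Set.union_compl_self, Set.univ_inter,
      Set.inter_univ, Set.empty_inter, Set.inter_empty, measure_empty, measure_univ,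
      one_mul, mul_one, zero_mul, mul_zero, Set.union_self] <;>
    first
      | rfl
      | (rw [mu_AA h, mu_A, mu_A, hq])
      | (rw [h1, mu_A, mu_A_compl, hq])
      | (rw [h2, mu_A_compl, mu_A, hq])
      | (rw [h3, mu_A_compl, mu_A_compl, hq])

lemma identDistrib_XX (i : ℕ) : IdentDistrib (XX i) (XX 0) mu mu := by
  classical
  refine ⟨(measurable_XX i).aemeasurable, (measurable_XX 0).aemeasurable, ?_⟩
  refine Measure.ext fun s hs => ?_
  rw [Measure.map_apply (measurable_XX i) hs, Measure.map_apply (measurable_XX 0) hs,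
    XX, XX, Set.indicator_const_preimage_eq_union, Set.indicator_const_preimage_eq_union]
  split_ifs <;>
    simp only [Set.union_empty, Set.empty_union, Set.union_compl_self, measure_univ,
      measure_empty, mu_A, mu_A_compl]

lemma integrable_XX : Integrable (XX 0) mu :=
  (integrable_const (1:ℝ)).indicator (measurableSet_digitOneSet 0)

lemma integral_XX : ∫ x, XX 0 x ∂mu = 1/2 := by
  rw [XX, integral_indicator_const _ (measurableSet_digitOneSet 0), measureReal_def, mu_A, smul_eq_mul, mul_one,
    ENNReal.toReal_ofReal (by norm_num)]

lemma ae_tendsto :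
    ∀ᵐ x ∂mu, Tendsto (fun N : ℕ => (∑ i ∈ Finset.range N, XX i x) / N) atTop (nhds (1/2)) := by
  have h := ProbabilityTheory.strong_law_ae_real XX integrable_XX
    (fun i j hij => (Ne.lt_or_gt hij).elim (fun h => indep_XX h) fun h => (indep_XX h).symm)
    identDistrib_XX
  rw [integral_XX] at h
  exact h

/-- Borel's normal number theorem for base 2: for almost every `x ∈ [0,1]`, the
binary digits of `x` (the `n`-th digit being `⌊2^(n+1) x⌋ - 2⌊2^n x⌋`) have
limiting frequency `1/2`. -/
theorem borel_normal_base_two :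
    ∀ᵐ x ∂(volume.restrict (Set.Icc (0 : ℝ) 1)),
      Tendsto
        (fun N : ℕ =>
          (((Finset.range N).filter
              (fun n => ⌊(2 : ℝ) ^ (n + 1) * x⌋ - 2 * ⌊(2 : ℝ) ^ n * x⌋ = 1)).card : ℝ) / N)
        atTop (nhds (1 / 2)) := by
  have h := ae_tendsto
  rw [show mu = volume.restrict (Set.Icc (0 : ℝ) 1) from rfl] at h
  filter_upwards [h] with x hx
  have hs : ∀ N : ℕ,
      (((Finset.range N).filter
          (fun n => ⌊(2 : ℝ) ^ (n + 1) * x⌋ - 2 * ⌊(2 : ℝ) ^ n * x⌋ = 1)).card : ℝ)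
        = ∑ i ∈ Finset.range N, XX i x := by
    intro N
    classical
    simp only [XX, Set.indicator_apply, digitOneSet, Set.mem_setOf_eq]
    rw [Finset.sum_boole]
  simpa only [hs] using hx
end
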